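/- (Gleason's Lemma, general unicritical version) Let d ≥ 2 and define Γ_0 = 0, Γ_{N+1} = Γ_N^d + b in ℤ[b]. For every N ≥ 1, all roots of Γ_N in an algebraic closure of ℚ are simple, i.e., Γ_N is separable. -/

import Mathlib

open Polynomial

private lemma gleason_monic (d : ℕ) (hd : 2 ≤ d) (Γ : ℕ → Polynomial ℤ)
    (h0 : Γ 0 = 0) (hrec : ∀ n, Γ (n + 1) = (Γ n) ^ d + X) (n : ℕ) :
    (Γ (n + 1)).Monic ∧ (Γ (n + 1)).natDegree = d ^ n := by
  induction n with
  | zero =>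
    have h1 : Γ 1 = X := by rw [hrec, h0, zero_pow (by omega), zero_add]
    rw [h1]
    exact ⟨monic_X, natDegree_X⟩
  | succ n ih =>
    obtain ⟨hm, hdeg⟩ := ih
    have hpow : ((Γ (n + 1)) ^ d).Monic := hm.pow d
    have hdp : ((Γ (n + 1)) ^ d).natDegree = d ^ (n + 1) := by
      rw [natDegree_pow, hdeg, pow_succ, mul_comm]
    have hlt : (X : Polynomial ℤ).degree < ((Γ (n + 1)) ^ d).degree := by
      rw [degree_X, degree_eq_natDegree hpow.ne_zero, hdp]
      exact_mod_cast Nat.one_lt_pow (Nat.succ_ne_zero n) (by omega)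
    refine ⟨by rw [hrec]; exact hpow.add_of_left hlt, ?_⟩
    rw [hrec]
    have := degree_add_eq_left_of_degree_lt hlt
    have h2 : (Γ (n + 1) ^ d + X).natDegree = (Γ (n + 1) ^ d).natDegree :=
      natDegree_eq_of_degree_eq this
    rw [h2, hdp]

theorem gleason_separable (d : ℕ) (hd : 2 ≤ d) (Γ : ℕ → Polynomial ℤ)
    (h0 : Γ 0 = 0) (hrec : ∀ n, Γ (n + 1) = (Γ n) ^ d + X)
    (N : ℕ) (hN : 1 ≤ N) :
    ((Γ N).map (Int.castRingHom (AlgebraicClosure ℚ))).Separable := by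
  classical
  set K := AlgebraicClosure ℚ
  set φ := Int.castRingHom K with hφ
  obtain ⟨m, rfl⟩ : ∃ m, N = m + 1 := ⟨N - 1, by omega⟩
  obtain ⟨hm, hdeg⟩ := gleason_monic d hd Γ h0 hrec m
  -- the derivative has the form d * h + 1
  set h : Polynomial ℤ := (Γ m) ^ (d - 1) * derivative (Γ m) with hh
  have hder : derivative (Γ (m + 1)) = C (d : ℤ) * h + 1 := by
    rw [hrec, derivative_add, derivative_X, derivative_pow, hh]
    ring
  -- no common root of f and its derivative
  have key : ∀ α : K, eval α ((Γ (m + 1)).map φ) = 0 →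
      eval α ((derivative (Γ (m + 1))).map φ) ≠ 0 := by
    intro α hroot hder0
    have hαint : IsIntegral ℤ α := by
      refine ⟨Γ (m + 1), hm, ?_⟩
      rwa [eval₂_eq_eval_map]
    set x : K := eval α (h.map φ) with hx
    have hxaev : x = aeval α h := by
      rw [hx, aeval_def, eval₂_eq_eval_map, Subsingleton.elim (algebraMap ℤ K) φ]
    have hxint : IsIntegral ℤ x := by
      refine IsIntegral.of_mem_of_fg (Algebra.adjoin ℤ {α})
        hαint.fg_adjoin_singleton x ?_
      rw [Algebra.adjoin_singleton_eq_range_aeval, hxaev]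
      exact ⟨h, rfl⟩
    have heq : (d : K) * x + 1 = 0 := by
      have := hder0
      rw [hder] at this
      simpa [hx] using this
    have hd0 : (d : ℚ) ≠ 0 := by positivity
    have hxval : algebraMap ℚ K (-(d : ℚ)⁻¹) = x := by
      have hdK : (d : K) ≠ 0 := by
        intro hdz
        rw [hdz, zero_mul, zero_add] at heq
        exact one_ne_zero heq
      rw [map_neg, map_inv₀, map_natCast]
      linear_combination (-heq) / (d : K) + x * mul_inv_cancel₀ hdK
    have hqint : IsIntegral ℤ (-(d : ℚ)⁻¹) := by
      rw [← isIntegral_algebraMap_iff (B := K)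
        (algebraMap ℚ K).injective, hxval]
      exact hxint
    obtain ⟨z, hz⟩ := IsIntegrallyClosed.isIntegral_iff.mp hqint
    have hz' : (z : ℚ) * d = -1 := by
      rw [show ((z : ℤ) : ℚ) = -(d : ℚ)⁻¹ from hz]
      field_simp
    have : (z : ℤ) * d = -1 := by exact_mod_cast hz'
    have hdvd : (d : ℤ) ∣ 1 := ⟨-z, by linarith⟩
    have := Int.le_of_dvd one_pos hdvd
    omega
  -- conclude separability
  set f := (Γ (m + 1)).map φ with hf
  have hfm : f.Monic := hm.map φ
  rw [Polynomial.Separable]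
  by_contra hnc
  rw [← EuclideanDomain.gcd_isUnit_iff] at hnc
  set g := EuclideanDomain.gcd f (derivative f) with hg
  have hg0 : g ≠ 0 := by
    intro hz
    exact hfm.ne_zero (EuclideanDomain.gcd_eq_zero_iff.mp hz).1
  have hgd : g.degree ≠ 0 := fun hdz => hnc (isUnit_iff_degree_eq_zero.mpr hdz)
  obtain ⟨α, hα⟩ := IsAlgClosed.exists_root g hgd
  have h1 : eval α f = 0 :=
    eval_eq_zero_of_dvd_of_eval_eq_zero (EuclideanDomain.gcd_dvd_left _ _) hα
  have h2 : eval α (derivative f) = 0 :=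
    eval_eq_zero_of_dvd_of_eval_eq_zero (EuclideanDomain.gcd_dvd_right _ _) hα
  rw [hf, derivative_map] at h2
  exact key α h1 h2
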